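/- (Proposition 4, Nash equilibrium under generalized uniform pricing) Assume ∑ᵢ yᵢ*(p̄) > D and let quantities (qᵢ*) satisfy ∑ᵢ qᵢ* = D and 0 < qᵢ* ≤ yᵢ*(p̄) for all i. Then the bid profile (pᵢ*, qᵢ*) = (0, qᵢ*) for all suppliers i is a pure Nash equilibrium of the generalized uniform-pricing game: at this profile the clearing price is p̄ and each supplier earns Rᵢ(qᵢ*; p̄); and for every supplier i, every unilateral deviation (pᵢ', qᵢ') ∈ [0, p̄] × [0, ∞), and every merit-order-optimal allocation with clearing price determined by the pricing rule after the deviation, supplier i's payoff does not exceed Rᵢ(qᵢ*; p̄). -/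

import Mathlib

open MeasureTheory Set

/-- The cumulative distribution function `F(t) = P(X ≤ t)` of a random variable `X`. -/
noncomputable def cdfOf {Ω : Type*} [MeasurableSpace Ω] (μ : Measure Ω) (X : Ω → ℝ) (t : ℝ) : ℝ :=
  (μ {ω | X ω ≤ t}).toReal

/-- The generalized inverse `F⁻¹(u) = inf {t ≥ 0 : F(t) ≥ u}`. -/
noncomputable def geninv (F : ℝ → ℝ) (u : ℝ) : ℝ :=
  sInf {t : ℝ | 0 ≤ t ∧ u ≤ F t}

/-- The optimal commitment function `y*(π) = F⁻¹(min(π/λ, 1))`. -/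
noncomputable def ystar (F : ℝ → ℝ) (lam : ℝ) (pr : ℝ) : ℝ :=
  geninv F (min (pr / lam) 1)

/-- The expected profit `R(x; π) = x·π − λ·E[(x − X)⁺]` of a supplier paid day-ahead
price `π` for committed quantity `x`, with real-time penalty price `λ`. -/
noncomputable def profit {Ω : Type*} [MeasurableSpace Ω] (μ : Measure Ω) (X : Ω → ℝ)
    (lam : ℝ) (pr : ℝ) (x : ℝ) : ℝ :=
  x * pr - lam * ∫ ω, max (x - X ω) 0 ∂μ

/-- Extend a quantity/price/allocation vector over the suppliers `Fin I` to the index set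
`Option (Fin I)`, where `none` stands for the system operator (supplier `0`), whose value
is `a0`. -/
def extOp {I : ℕ} (a0 : ℝ) (a : Fin I → ℝ) : Option (Fin I) → ℝ :=
  fun j => j.elim a0 a

/-- Merit-order-optimal allocation: the operator is supplier `0` with bid price `p̄` and
quantity `D`; the allocation `(x₀, x)` is feasible and maximizes
`∑_{i=0}^{I} (p̄ − pᵢ)·xᵢ` subject to `∑_{i=0}^{I} xᵢ = D` and `0 ≤ xᵢ ≤ qᵢ`. -/
def MeritOpt {I : ℕ} (pbar D : ℝ) (p q : Fin I → ℝ) (x0 : ℝ) (x : Fin I → ℝ) : Prop :=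
  (0 ≤ x0 ∧ x0 ≤ D ∧ (∀ i, 0 ≤ x i ∧ x i ≤ q i) ∧ x0 + ∑ i, x i = D) ∧
  ∀ (y0 : ℝ) (y : Fin I → ℝ),
    0 ≤ y0 → y0 ≤ D → (∀ i, 0 ≤ y i ∧ y i ≤ q i) → y0 + ∑ i, y i = D →
    (pbar - pbar) * y0 + ∑ i, (pbar - p i) * y i
      ≤ (pbar - pbar) * x0 + ∑ i, (pbar - p i) * x i

/-- The clearing price rule: let `P` be the maximum bid price among indices (including the
operator, with bid price `p̄` and quantity `D`) with `xᵢ > 0`; if some index `i` with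
`pᵢ = P` and `xᵢ > 0` has `xᵢ < qᵢ`, the clearing price is `P`; otherwise it is the
minimum bid price among indices (including the operator) with `xᵢ = 0`. -/
def IsClearingPrice {I : ℕ} (pbar D : ℝ) (p q : Fin I → ℝ) (x0 : ℝ) (x : Fin I → ℝ)
    (c : ℝ) : Prop :=
  (∃ i : Option (Fin I), 0 < extOp x0 x i ∧ extOp x0 x i < extOp D q i ∧
      (∀ k : Option (Fin I), 0 < extOp x0 x k → extOp pbar p k ≤ extOp pbar p i) ∧
      c = extOp pbar p i) ∨
  ((¬ ∃ i : Option (Fin I), 0 < extOp x0 x i ∧ extOp x0 x i < extOp D q i ∧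
      (∀ k : Option (Fin I), 0 < extOp x0 x k → extOp pbar p k ≤ extOp pbar p i)) ∧
    ∃ j : Option (Fin I), extOp x0 x j = 0 ∧
      (∀ k : Option (Fin I), extOp x0 x k = 0 → extOp pbar p j ≤ extOp pbar p k) ∧
      c = extOp pbar p j)

section Aux
variable {Ω : Type*} [MeasurableSpace Ω] (μ : Measure Ω) [IsProbabilityMeasure μ]

lemma integrable_pos_part (X : Ω → ℝ) (hX : Measurable X) (hXnn : ∀ ω, 0 ≤ X ω) (x : ℝ) :
    Integrable (fun ω => max (x - X ω) 0) μ := by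
  refine Integrable.mono' (integrable_const (max x 0))
    ((measurable_const.sub hX).max measurable_const).aestronglyMeasurable ?_
  refine Filter.Eventually.of_forall fun ω => ?_
  rw [Real.norm_eq_abs, abs_of_nonneg (le_max_right _ _)]
  exact max_le_max (by linarith [hXnn ω]) le_rfl

lemma cdfOf_mono (X : Ω → ℝ) : Monotone (cdfOf μ X) := fun a b hab =>
  ENNReal.toReal_mono (measure_ne_top μ _) (measure_mono fun ω h => le_trans h hab)

lemma cdfOf_nonneg (X : Ω → ℝ) (t : ℝ) : 0 ≤ cdfOf μ X t := ENNReal.toReal_nonneg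

lemma cdf_le_of_le_ystar (F : ℝ → ℝ) (hFc : Continuous F) (hFmono : Monotone F)
    (hF00 : F 0 = 0) (T : ℝ) (hT0 : 0 < T) (hT1 : F T = 1)
    (lam pbar : ℝ) (hlam : 0 < lam) (hpbar : 0 < pbar)
    (b : ℝ) (hb : b ≤ ystar F lam pbar) : F b ≤ pbar / lam := by
  set u := min (pbar / lam) 1 with hu
  have hu0 : 0 < u := lt_min (div_pos hpbar hlam) one_pos
  have hTS : T ∈ {t : ℝ | 0 ≤ t ∧ u ≤ F t} := ⟨hT0.le, by rw [hT1]; exact min_le_right _ _⟩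
  have hbdd : BddBelow {t : ℝ | 0 ≤ t ∧ u ≤ F t} := ⟨0, fun t ht => ht.1⟩
  set y := ystar F lam pbar with hy
  have hy0 : 0 ≤ y := le_csInf ⟨T, hTS⟩ fun t ht => ht.1
  have hFy : F y ≤ u := by
    by_contra h
    push_neg at h
    rcases hy0.lt_or_eq with hypos | hyzero
    · obtain ⟨δ, hδ, hball⟩ := Metric.isOpen_iff.mp (isOpen_lt continuous_const hFc)
        y (by exact h)
      set t := max 0 (y - δ/2) with ht
      have ht0 : 0 ≤ t := le_max_left _ _
      have htlt : t < y := by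
        rcases le_or_gt (y - δ/2) 0 with h1 | h1
        · simpa [ht, max_eq_left h1] using hypos
        · rw [ht, max_eq_right h1.le]; linarith
      have htball : t ∈ Metric.ball y δ := by
        rw [Metric.mem_ball, Real.dist_eq, abs_of_nonpos (by linarith)]
        have : y - δ/2 ≤ t := le_max_right _ _
        linarith
      have htS : t ∈ {t : ℝ | 0 ≤ t ∧ u ≤ F t} := ⟨ht0, (hball htball).le⟩
      exact absurd (csInf_le hbdd htS) (not_le.mpr htlt)
    · rw [← hyzero, hF00] at h; linarith
  calc F b ≤ F y := hFmono hb
    _ ≤ u := hFy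
    _ ≤ pbar / lam := min_le_left _ _

lemma profit_mono (X : Ω → ℝ) (hX : Measurable X) (hXnn : ∀ ω, 0 ≤ X ω)
    (lam pbar : ℝ) (hlam : 0 < lam) (a b : ℝ) (hab : a ≤ b)
    (hFb : cdfOf μ X b ≤ pbar / lam) :
    profit μ X lam pbar a ≤ profit μ X lam pbar b := by
  have hs : MeasurableSet {ω | X ω ≤ b} := hX measurableSet_Iic
  have hIa := integrable_pos_part μ X hX hXnn a
  have hIb := integrable_pos_part μ X hX hXnn b
  have hind : Integrable ({ω | X ω ≤ b}.indicator fun _ => b - a) μ :=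
    (integrable_const (b - a)).indicator hs
  have key : ∫ ω, max (b - X ω) 0 ∂μ ≤ ∫ ω, max (a - X ω) 0 ∂μ + cdfOf μ X b * (b - a) := by
    have hmono : ∫ ω, max (b - X ω) 0 ∂μ
        ≤ ∫ ω, (max (a - X ω) 0 + {ω | X ω ≤ b}.indicator (fun _ => b - a) ω) ∂μ := by
      refine integral_mono hIb (hIa.add hind) fun ω => ?_
      by_cases hω : X ω ≤ b
      · simp only [Set.indicator_of_mem (show ω ∈ {ω | X ω ≤ b} from hω)]
        rcases le_or_gt (a - X ω) 0 with h1 | h1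
        · rw [max_eq_right h1]
          have := le_max_left (b - X ω) 0
          rcases le_or_gt (b - X ω) 0 with h2 | h2
          · rw [max_eq_right h2]; linarith
          · rw [max_eq_left h2.le]; linarith
        · rw [max_eq_left h1.le, max_eq_left (by linarith)]; linarith
      · push_neg at hω
        rw [Set.indicator_of_notMem (show ω ∉ {ω | X ω ≤ b} from not_le.mpr hω)]
        rw [max_eq_right (by linarith), max_eq_right (by linarith)]; simp
    rw [integral_add hIa hind, integral_indicator_const _ hs] at hmono
    simpa [cdfOf, smul_eq_mul, mul_comm, Measure.real] using hmono
  have hFb' : cdfOf μ X b * lam ≤ pbar := by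
    rw [← le_div_iff₀ hlam]; exact hFb
  simp only [profit]
  nlinarith [mul_le_mul_of_nonneg_left key hlam.le]

lemma profit_zero (X : Ω → ℝ) (hXnn : ∀ ω, 0 ≤ X ω) (lam pr : ℝ) :
    profit μ X lam pr 0 = 0 := by
  have h : (fun ω => max (0 - X ω) 0) = fun _ => (0:ℝ) := by
    funext ω; rw [max_eq_right (by linarith [hXnn ω])]
  unfold profit
  rw [h, integral_zero]; ring

lemma profit_price_zero_nonpos (X : Ω → ℝ) (lam : ℝ) (hlam : 0 < lam) (x : ℝ) :
    profit μ X lam 0 x ≤ 0 := by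
  have : 0 ≤ ∫ ω, max (x - X ω) 0 ∂μ := integral_nonneg fun ω => le_max_right _ _
  simp only [profit, mul_zero, zero_sub, neg_nonpos]
  positivity

end Aux

lemma sum_w_update1 {n : ℕ} (w x : Fin n → ℝ) (j : Fin n) (B : ℝ) :
    ∑ k, w k * Function.update x j B k = ∑ k, w k * x k + w j * (B - x j) := by
  have h : ∀ k ∈ Finset.univ, w k * Function.update x j B k
      = w k * x k + (if k = j then w j * (B - x j) else 0) := by
    intro k _
    rcases eq_or_ne k j with rfl | hkj
    · simp [Function.update_self]; ring
    · simp [Function.update_of_ne hkj, hkj]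
  rw [Finset.sum_congr rfl h, Finset.sum_add_distrib]
  simp [Finset.sum_ite_eq']

lemma sum_w_update2 {n : ℕ} (w x : Fin n → ℝ) {i j : Fin n} (hij : j ≠ i) (A B : ℝ) :
    ∑ k, w k * Function.update (Function.update x i A) j B k
      = ∑ k, w k * x k + w i * (A - x i) + w j * (B - x j) := by
  rw [sum_w_update1, sum_w_update1, Function.update_of_ne hij]

/-- Proposition 4 (Nash equilibrium under generalized uniform pricing): if
`∑ᵢ yᵢ*(p̄) > D` and the quantities `qᵢ*` satisfy `∑ᵢ qᵢ* = D` and `0 < qᵢ* ≤ yᵢ*(p̄)`,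
then the profile in which every supplier bids price `0` and quantity `qᵢ*` is a pure Nash
equilibrium: at the profile every merit-order-optimal allocation commits each supplier to
`qᵢ*` with zero lost load and clearing price `p̄`, so supplier `i` earns `Rᵢ(qᵢ*; p̄)`; and
after any unilateral deviation `(pᵢ', qᵢ') ∈ [0, p̄] × [0, ∞)`, for every merit-order-optimal
allocation and clearing price determined by the pricing rule, supplier `i`'s payoff does not
exceed `Rᵢ(qᵢ*; p̄)`. -/

theorem up_general_zero_bid_equilibrium
    {Ω : Type*} [MeasurableSpace Ω] (μ : Measure Ω) [IsProbabilityMeasure μ]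
    (I : ℕ) (hI : 2 ≤ I)
    (X : Fin I → Ω → ℝ) (hX : ∀ i, Measurable (X i)) (hXnn : ∀ i ω, 0 ≤ X i ω)
    (Xbar : Fin I → ℝ) (hXbar : ∀ i, 0 < Xbar i)
    (hsupp : ∀ i, μ {ω | X i ω ≤ Xbar i} = 1)
    (hFc : ∀ i, Continuous (cdfOf μ (X i)))
    (hF0 : ∀ i, cdfOf μ (X i) 0 = 0) (hF1 : ∀ i, cdfOf μ (X i) (Xbar i) = 1)
    (lam : ℝ) (hlam : 0 < lam) (pbar : ℝ) (hpbar : 0 < pbar)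
    (D : ℝ) (hD : 0 < D)
    (hadeq : D < ∑ i, ystar (cdfOf μ (X i)) lam pbar)
    (q : Fin I → ℝ) (hqsum : ∑ i, q i = D)
    (hq : ∀ i, 0 < q i ∧ q i ≤ ystar (cdfOf μ (X i)) lam pbar) :
    -- at the profile, the allocation is `x = q`, `x₀ = 0`, and the clearing price is `p̄`
    (∀ (x0 : ℝ) (x : Fin I → ℝ), MeritOpt pbar D (fun _ => (0:ℝ)) q x0 x →
      (∀ i, x i = q i) ∧ x0 = 0 ∧
      ∀ c : ℝ, IsClearingPrice pbar D (fun _ => (0:ℝ)) q x0 x c → c = pbar) ∧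
    -- no unilateral deviation is profitable
    (∀ (i : Fin I) (p' q' : ℝ), 0 ≤ p' → p' ≤ pbar → 0 ≤ q' →
      ∀ (x0 : ℝ) (x : Fin I → ℝ),
        MeritOpt pbar D (Function.update (fun _ => (0:ℝ)) i p')
          (Function.update q i q') x0 x →
        ∀ c : ℝ, IsClearingPrice pbar D (Function.update (fun _ => (0:ℝ)) i p')
          (Function.update q i q') x0 x c →
          profit μ (X i) lam c (x i) ≤ profit μ (X i) lam pbar (q i)) := by
  classical
  constructor
  · rintro x0 x ⟨⟨hx00, hx0D, hxi, hxsum⟩, hopt⟩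
    have hobj := hopt 0 q le_rfl hD.le (fun i => ⟨(hq i).1.le, le_rfl⟩)
      (by rw [zero_add]; exact hqsum)
    simp only [sub_self, zero_mul, zero_add, sub_zero] at hobj
    rw [← Finset.mul_sum, ← Finset.mul_sum] at hobj
    have hsge : ∑ i, q i ≤ ∑ i, x i := le_of_mul_le_mul_left hobj hpbar
    have hxeq : ∀ i, x i = q i := by
      intro i
      by_contra hne
      have hlt : x i < q i := lt_of_le_of_ne (hxi i).2 hne
      have : ∑ k, x k < ∑ k, q k :=
        Finset.sum_lt_sum (fun k _ => (hxi k).2) ⟨i, Finset.mem_univ i, hlt⟩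
      linarith
    have hsx : ∑ k, x k = D := by
      rw [Finset.sum_congr rfl fun k _ => hxeq k, hqsum]
    refine ⟨hxeq, by linarith, ?_⟩
    intro c hc
    rcases hc with ⟨i', h1, h2, _, h4⟩ | ⟨_, j, hz, _, hcj⟩
    · rcases i' with _ | k
      · simp only [extOp, Option.elim] at h1
        linarith
      · simp only [extOp, Option.elim] at h1 h2
        rw [hxeq k] at h2; linarith
    · rcases j with _ | k
      · simpa [extOp] using hcj
      · simp only [extOp, Option.elim] at hz
        rw [hxeq k] at hz
        linarith [(hq k).1]
  · intro i p' q' hp'0 hp'le hq'0 x0 x hmo c hc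
    set pp := Function.update (fun _ => (0:ℝ)) i p' with hpp
    set qq := Function.update q i q' with hqq
    obtain ⟨⟨hx00, hx0D, hxi, hxsum⟩, hopt⟩ := hmo
    have hFqi : cdfOf μ (X i) (q i) ≤ pbar / lam :=
      cdf_le_of_le_ystar (cdfOf μ (X i)) (hFc i) (cdfOf_mono μ (X i)) (hF0 i)
        (Xbar i) (hXbar i) (hF1 i) lam pbar hlam hpbar (q i) (hq i).2
    have hprofq0 : 0 ≤ profit μ (X i) lam pbar (q i) := by
      have h := profit_mono μ (X i) (hX i) (hXnn i) lam pbar hlam 0 (q i) (hq i).1.le hFqi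
      rwa [profit_zero μ (X i) (hXnn i)] at h
    have hple : ∀ k : Option (Fin I), extOp pbar pp k ≤ pbar := by
      rintro (_ | m)
      · exact le_rfl
      · simp only [extOp, Option.elim, hpp, Function.update_apply]
        split_ifs
        · exact hp'le
        · exact hpbar.le
    have hcle : c ≤ pbar := by
      rcases hc with ⟨i', _, _, _, h4⟩ | ⟨_, j, _, _, hcj⟩
      · rw [h4]; exact hple i'
      · rw [hcj]; exact hple j
    rcases le_or_gt (x i) (q i) with hxa | hxb
    · -- Case A : x i ≤ q i
      have h1 : profit μ (X i) lam c (x i) ≤ profit μ (X i) lam pbar (x i) := by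
        simp only [profit]
        have := mul_le_mul_of_nonneg_left hcle (hxi i).1
        linarith
      have h2 := profit_mono μ (X i) (hX i) (hXnn i) lam pbar hlam (x i) (q i) hxa hFqi
      linarith
    · -- Case B : x i > q i
      have hsum_er_x : ∑ k ∈ Finset.univ.erase i, x k + x i = ∑ k, x k :=
        Finset.sum_erase_add _ _ (Finset.mem_univ i)
      have hsum_er_q : ∑ k ∈ Finset.univ.erase i, q k + q i = ∑ k, q k :=
        Finset.sum_erase_add _ _ (Finset.mem_univ i)
      have hltsum : ∑ k ∈ Finset.univ.erase i, x k < ∑ k ∈ Finset.univ.erase i, q k := by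
        linarith
      obtain ⟨j, hjmem, hjlt⟩ := Finset.exists_lt_of_sum_lt hltsum
      have hji : j ≠ i := (Finset.mem_erase.mp hjmem).1
      have hqqj : qq j = q j := Function.update_of_ne hji _ _
      have hp0 : p' = 0 := by
        by_contra hne
        have hp'pos : 0 < p' := hp'0.lt_of_ne (Ne.symm hne)
        set ε := min (x i - q i) (q j - x j) with hε
        have hεpos : 0 < ε := lt_min (by linarith) (by linarith)
        have hεl : ε ≤ x i - q i := min_le_left _ _
        have hεr : ε ≤ q j - x j := min_le_right _ _
        set y := Function.update (Function.update x i (x i - ε)) j (x j + ε) with hy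
        have hyfeas : ∀ k, 0 ≤ y k ∧ y k ≤ qq k := by
          intro k
          rcases eq_or_ne k j with rfl | hkj
          · rw [hy, Function.update_self]
            exact ⟨by linarith [(hxi k).1], by rw [hqqj]; linarith⟩
          · rw [hy, Function.update_of_ne hkj]
            rcases eq_or_ne k i with rfl | hki
            · rw [Function.update_self]
              exact ⟨by linarith [(hq k).1], by linarith [(hxi k).2]⟩
            · rw [Function.update_of_ne hki]; exact hxi k
        have hysum : x0 + ∑ k, y k = D := by
          have h1 := sum_w_update2 (fun _ => (1:ℝ)) x hji (x i - ε) (x j + ε)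
          simp only [one_mul] at h1
          rw [hy, h1]; linarith
        have hobj := hopt x0 y hx00 hx0D hyfeas hysum
        have h2 := sum_w_update2 (fun k => pbar - pp k) x hji (x i - ε) (x j + ε)
        rw [hy, h2] at hobj
        have hppi : pp i = p' := Function.update_self _ _ _
        have hppj : pp j = 0 := Function.update_of_ne hji _ _
        simp only [hppi, hppj] at hobj
        nlinarith [mul_pos hp'pos hεpos]
      have hx0z : x0 = 0 := by
        by_contra hne
        have hx0pos : 0 < x0 := hx00.lt_of_ne (Ne.symm hne)
        set ε := min x0 (q j - x j) with hε
        have hεpos : 0 < ε := lt_min hx0pos (by linarith)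
        have hεl : ε ≤ x0 := min_le_left _ _
        have hεr : ε ≤ q j - x j := min_le_right _ _
        set y := Function.update x j (x j + ε) with hy
        have hyfeas : ∀ k, 0 ≤ y k ∧ y k ≤ qq k := by
          intro k
          rcases eq_or_ne k j with rfl | hkj
          · rw [hy, Function.update_self]
            exact ⟨by linarith [(hxi k).1], by rw [hqqj]; linarith⟩
          · rw [hy, Function.update_of_ne hkj]; exact hxi k
        have hysum : (x0 - ε) + ∑ k, y k = D := by
          have h1 := sum_w_update1 (fun _ => (1:ℝ)) x j (x j + ε)
          simp only [one_mul] at h1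
          rw [hy, h1]; linarith
        have hobj := hopt (x0 - ε) y (by linarith) (by linarith) hyfeas hysum
        have h1 := sum_w_update1 (fun k => pbar - pp k) x j (x j + ε)
        rw [hy, h1] at hobj
        have hppj : pp j = 0 := Function.update_of_ne hji _ _
        simp only [hppj] at hobj
        nlinarith [mul_pos hpbar hεpos]
      have hppz : pp = fun _ => (0:ℝ) := by
        rw [hpp, hp0]
        exact Function.update_eq_self i _
      have hc0 : c = 0 := by
        rcases hc with ⟨i', h1, h2, h3, h4⟩ | ⟨hnex, j', hz, hmin, hcj⟩
        · rcases i' with _ | k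
          · simp only [extOp, Option.elim] at h1; linarith
          · rw [h4]; simp [extOp, hppz]
        · rcases j' with _ | k
          · exfalso
            rcases (hxi j).1.lt_or_eq with hjpos | hjzero
            · apply hnex
              refine ⟨some j, ?_, ?_, ?_⟩
              · simpa [extOp] using hjpos
              · simpa [extOp, hqqj] using hjlt
              · rintro (_ | m) hk
                · simp only [extOp, Option.elim] at hk; linarith
                · simp [extOp, hppz]
            · have hh := hmin (some j) (by simpa [extOp] using hjzero.symm)
              simp only [extOp, Option.elim, hppz] at hh
              linarith
          · rw [hcj]; simp [extOp, hppz]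
      rw [hc0]
      exact le_trans (profit_price_zero_nonpos μ (X i) lam hlam (x i)) hprofq0
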